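/- Let α > 1, σ > 0, h > 0, and let W : ℝ^{3×3} → [0,∞) be continuous, frame indifferent, with W(αI) = 0 and C₁·dist²(F, α·SO(3)) ≤ W(F) for all F, for some C₁ > 0. For θ ∈ [α⁻¹,1] and R > 0 let E^{el}_{α,R}(θ) and E^{tot}_{α,R}(θ) = E^{el}_{α,R}(θ) + σR²(1−θ²) be as below, and set E^{tot}_{α,R} := inf_{θ ∈ [α⁻¹,1]} E^{tot}_{α,R}(θ). If θ_R ∈ [α⁻¹,1] (R > 0) is a minimizing family, i.e. E^{tot}_{α,R}(θ_R) − E^{tot}_{α,R} → 0 as R → +∞, then E^{el}_{α,1}(θ_R) → 0 as R → +∞. -/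

import Mathlib

open MeasureTheory Filter Set Matrix
open scoped ENNReal NNReal

noncomputable section

/-- 3×3 real matrices. -/
abbrev Mat3 := Matrix (Fin 3) (Fin 3) ℝ

/-- Euclidean 3-space. -/
abbrev E3 := EuclideanSpace ℝ (Fin 3)

/-- The matrix of a continuous linear map `E3 →L[ℝ] E3` in the standard basis. -/
def matOf (f : E3 →L[ℝ] E3) : Mat3 := fun i j => f (EuclideanSpace.single j 1) i

/-- Frobenius norm of a 3×3 matrix. -/
def frob (M : Mat3) : ℝ := Real.sqrt (∑ i, ∑ j, (M i j)^2)

/-- The special orthogonal group SO(3), as a set of matrices. -/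
def SO3 : Set Mat3 := {Q | Q * Q.transpose = 1 ∧ Q.det = 1}

/-- Frobenius distance from `F` to the well `α·SO(3)`. -/
def distSO (α : ℝ) (F : Mat3) : ℝ := sInf {d : ℝ | ∃ Q ∈ SO3, d = frob (F - α • Q)}

/-- Matrix-vector multiplication, as a map on Euclidean space. -/
def mulVecE (A : Mat3) (x : E3) : E3 := WithLp.toLp 2 (A.mulVec x)

/-- `v` is locally Lipschitz on the (open) set `s`. -/
def LocLipOn (s : Set E3) (v : E3 → E3) : Prop :=
  ∀ x ∈ s, ∃ K : ℝ≥0, ∃ t ∈ nhds x, t ⊆ s ∧ LipschitzOnWith K v t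

/-- The interface square `S_r = (−r/2,r/2)² × {0}`. -/
def Sface (r : ℝ) : Set E3 := {x | |x 0| < r/2 ∧ |x 1| < r/2 ∧ x 2 = 0}

/-- The overlayer `Ω⁺_r = (−r/2,r/2)² × (0,hr)`. -/
def Oplus (h r : ℝ) : Set E3 := {x | |x 0| < r/2 ∧ |x 1| < r/2 ∧ 0 < x 2 ∧ x 2 < h*r}

/-- The admissible class `ADM_{θ,R}` (with `r = θR`): maps that are continuous on the closure
of `Ω⁺_r`, continuously differentiable on `Ω⁺_r`, and equal to `θ⁻¹x` on `S_r`. -/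
def Adm (h θ r : ℝ) (v : E3 → E3) : Prop :=
  ContinuousOn v (closure (Oplus h r)) ∧ ContDiffOn ℝ 1 v (Oplus h r) ∧
    ∀ x ∈ Sface r, v x = θ⁻¹ • x

/-- The elastic energy `E^{el}_{α,R}(θ)`: the infimum of `∫_{Ω⁺_{θR}} W(Dv)` over the
admissible class `ADM_{θ,R}`, as an element of `[0,∞]`. -/
def Eel (W : Mat3 → ℝ≥0∞) (h θ R : ℝ) : ℝ≥0∞ :=
  sInf {e : ℝ≥0∞ | ∃ v : E3 → E3, Adm h θ (θ*R) v ∧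
    e = ∫⁻ x in Oplus h (θ*R), W (matOf (fderiv ℝ v x))}

/-- The total energy `E^{tot}_{α,R}(θ) = E^{el}_{α,R}(θ) + σR²(1−θ²)`, in `[0,∞]`. -/
def Etot (W : Mat3 → ℝ) (h σ θ R : ℝ) : ℝ≥0∞ :=
  Eel (fun F => ENNReal.ofReal (W F)) h θ R + ENNReal.ofReal (σ * R^2 * (1 - θ^2))

/-- The optimal total energy `E^{tot}_{α,R} = inf_{θ ∈ [α⁻¹,1]} E^{tot}_{α,R}(θ)`. -/
def EtotInf (W : Mat3 → ℝ) (h σ α R : ℝ) : ℝ≥0∞ :=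
  sInf {e : ℝ≥0∞ | ∃ θ ∈ Set.Icc α⁻¹ (1:ℝ), e = Etot W h σ θ R}

-- auxiliary lemmas

lemma E3smul (c : ℝ) (x : E3) (i : Fin 3) : (c • x) i = c * x i := rfl

lemma isOpen_Oplus (h r : ℝ) : IsOpen (Oplus h r) := by
  have hc : ∀ i : Fin 3, Continuous fun x : E3 => x i := fun i => by
    simpa using (EuclideanSpace.proj (i : Fin 3) : E3 →L[ℝ] ℝ).continuous
  have : Oplus h r = {x : E3 | |x 0| < r/2} ∩ ({x | |x 1| < r/2} ∩ ({x | 0 < x 2} ∩ {x | x 2 < h*r})) := by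
    ext x; simp [Oplus, and_assoc]
  rw [this]
  exact ((isOpen_lt (hc 0).abs continuous_const).inter
    ((isOpen_lt (hc 1).abs continuous_const).inter
      ((isOpen_lt continuous_const (hc 2)).inter (isOpen_lt (hc 2) continuous_const))))

lemma smul_mem_Oplus {h r R : ℝ} (hR : 0 < R) {x : E3} (hx : x ∈ Oplus h r) :
    R • x ∈ Oplus h (R * r) := by
  obtain ⟨h1, h2, h3, h4⟩ := hx
  refine ⟨?_, ?_, ?_, ?_⟩ <;> simp only [E3smul]
  · rw [abs_mul, abs_of_pos hR]
    calc R * |x 0| < R * (r/2) := by exact mul_lt_mul_of_pos_left h1 hR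
      _ = R * r / 2 := by ring
  · rw [abs_mul, abs_of_pos hR]
    calc R * |x 1| < R * (r/2) := by exact mul_lt_mul_of_pos_left h2 hR
      _ = R * r / 2 := by ring
  · exact mul_pos hR h3
  · calc R * x 2 < R * (h * r) := mul_lt_mul_of_pos_left h4 hR
      _ = h * (R * r) := by ring

lemma smul_mem_Sface {r R : ℝ} (hR : 0 < R) {x : E3} (hx : x ∈ Sface r) :
    R • x ∈ Sface (R * r) := by
  obtain ⟨h1, h2, h3⟩ := hx
  refine ⟨?_, ?_, ?_⟩ <;> simp only [E3smul]
  · rw [abs_mul, abs_of_pos hR]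
    calc R * |x 0| < R * (r/2) := mul_lt_mul_of_pos_left h1 hR
      _ = R * r / 2 := by ring
  · rw [abs_mul, abs_of_pos hR]
    calc R * |x 1| < R * (r/2) := mul_lt_mul_of_pos_left h2 hR
      _ = R * r / 2 := by ring
  · rw [h3, mul_zero]

lemma image_smul_Oplus {h r R : ℝ} (hR : 0 < R) :
    (fun x : E3 => R • x) '' Oplus h r = Oplus h (R * r) := by
  ext y
  constructor
  · rintro ⟨x, hx, rfl⟩; exact smul_mem_Oplus hR hx
  · intro hy
    refine ⟨R⁻¹ • y, ?_, by simp [smul_smul, mul_inv_cancel₀ hR.ne']⟩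
    have := smul_mem_Oplus (inv_pos.2 hR) hy
    rwa [inv_mul_cancel_left₀ hR.ne'] at this

lemma lintegral_comp_smul_set (f : E3 → ℝ≥0∞) {R : ℝ} (hR : 0 < R) (s : Set E3)
    (hs : MeasurableSet s) :
    ∫⁻ x in s, f (R • x) = ENNReal.ofReal ((R ^ 3)⁻¹) * ∫⁻ y in (fun x : E3 => R • x) '' s, f y := by
  have hR0 : R ≠ 0 := hR.ne'
  let e : E3 ≃ᵐ E3 := (Homeomorph.smulOfNeZero R hR0).toMeasurableEquiv
  have hec : ⇑e = fun x : E3 => R • x := rfl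
  have himg : MeasurableSet ((fun x : E3 => R • x) '' s) := by
    rw [← hec]; exact e.measurableSet_image.2 hs
  have hpre : (fun x : E3 => R • x) ⁻¹' ((fun x : E3 => R • x) '' s) = s := by
    rw [← hec]; exact e.toEquiv.preimage_image s
  have hmap : Measure.map (fun x : E3 => R • x) (volume : Measure E3)
      = ENNReal.ofReal ((R ^ 3)⁻¹) • volume := by
    have := Measure.map_addHaar_smul (volume : Measure E3) hR0
    rw [finrank_euclideanSpace_fin] at this
    rwa [abs_of_pos (inv_pos.2 (pow_pos hR 3))] at this
  calc ∫⁻ x in s, f (R • x) = ∫⁻ x, f (e x) ∂(volume.restrict s) := by rw [hec]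
    _ = ∫⁻ y, f y ∂(Measure.map (⇑e) (volume.restrict s)) := (lintegral_map_equiv f e).symm
    _ = ∫⁻ y, f y ∂((Measure.map (fun x : E3 => R • x) volume).restrict
          ((fun x : E3 => R • x) '' s)) := by
        rw [Measure.restrict_map (continuous_const_smul R).measurable himg, hpre, hec]
    _ = ENNReal.ofReal ((R ^ 3)⁻¹) * ∫⁻ y in (fun x : E3 => R • x) '' s, f y := by
        rw [hmap, Measure.restrict_smul, lintegral_smul_measure, smul_eq_mul]

lemma Eel_key (W' : Mat3 → ℝ≥0∞) (h θ R : ℝ) (hR : 0 < R) (v : E3 → E3)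
    (hv : Adm h θ (θ * R) v) :
    Eel W' h θ 1 ≤ ENNReal.ofReal ((R ^ 3)⁻¹) *
      ∫⁻ x in Oplus h (θ * R), W' (matOf (fderiv ℝ v x)) := by
  obtain ⟨hv1, hv2, hv3⟩ := hv
  have hRne : R ≠ 0 := hR.ne'
  set w : E3 → E3 := fun x => R⁻¹ • v (R • x) with hw
  have hmapsto : MapsTo (fun x : E3 => R • x) (Oplus h (θ * 1)) (Oplus h (θ * R)) := by
    intro x hx
    have := smul_mem_Oplus hR hx
    rwa [show R * (θ * 1) = θ * R by ring] at this
  have himg : (fun x : E3 => R • x) '' Oplus h (θ * 1) = Oplus h (θ * R) := by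
    rw [image_smul_Oplus hR]; ring_nf
  have hcont : Continuous fun x : E3 => R • x := continuous_const_smul R
  have hsm : ContDiff ℝ 1 fun x : E3 => R • x := contDiff_id.const_smul R
  have hfd : ∀ x ∈ Oplus h (θ * 1), matOf (fderiv ℝ w x) = matOf (fderiv ℝ v (R • x)) := by
    intro x hx
    have hx' : R • x ∈ Oplus h (θ * R) := hmapsto hx
    have hdv : DifferentiableAt ℝ v (R • x) :=
      (hv2.differentiableOn one_ne_zero).differentiableAt ((isOpen_Oplus h (θ * R)).mem_nhds hx')
    have hL : HasFDerivAt (fun y : E3 => R • y) (R • ContinuousLinearMap.id ℝ E3) x :=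
      (hasFDerivAt_id x).const_smul R
    have h1 : HasFDerivAt (fun y => v (R • y))
        ((fderiv ℝ v (R • x)).comp (R • ContinuousLinearMap.id ℝ E3)) x :=
      hdv.hasFDerivAt.comp x hL
    have h2 : HasFDerivAt w
        (R⁻¹ • ((fderiv ℝ v (R • x)).comp (R • ContinuousLinearMap.id ℝ E3))) x :=
      h1.const_smul R⁻¹
    rw [h2.fderiv]
    ext u
    simp [ContinuousLinearMap.smul_apply, ContinuousLinearMap.comp_apply,
      ContinuousLinearMap.map_smul, smul_smul, inv_mul_cancel₀ hRne]
  have hint : ∫⁻ x in Oplus h (θ * 1), W' (matOf (fderiv ℝ w x))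
      = ENNReal.ofReal ((R ^ 3)⁻¹) * ∫⁻ x in Oplus h (θ * R), W' (matOf (fderiv ℝ v x)) := by
    rw [setLIntegral_congr_fun (isOpen_Oplus _ _).measurableSet
      (fun x hx => by rw [hfd x hx])]
    have h3 := lintegral_comp_smul_set (fun y => W' (matOf (fderiv ℝ v y))) hR
      (Oplus h (θ * 1)) (isOpen_Oplus _ _).measurableSet
    rw [himg] at h3
    exact h3
  refine sInf_le ⟨w, ⟨?_, ?_, ?_⟩, hint.symm⟩
  · exact (hv1.comp hcont.continuousOn (hmapsto.closure hcont)).const_smul R⁻¹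
  · exact (hv2.comp hsm.contDiffOn hmapsto).const_smul R⁻¹
  · intro x hx
    have hx' : R • x ∈ Sface (θ * R) := by
      have := smul_mem_Sface hR hx
      rwa [show R * (θ * 1) = θ * R by ring] at this
    show R⁻¹ • v (R • x) = θ⁻¹ • x
    rw [hv3 _ hx', smul_smul, smul_smul,
      show R⁻¹ * θ⁻¹ * R = θ⁻¹ by
        rw [mul_comm (R⁻¹ * θ⁻¹) R, ← mul_assoc, mul_inv_cancel₀ hRne, one_mul]]

lemma Eel_scale (W' : Mat3 → ℝ≥0∞) (h θ R : ℝ) (hR : 0 < R) :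
    Eel W' h θ 1 ≤ ENNReal.ofReal ((R ^ 3)⁻¹) * Eel W' h θ R := by
  set c := ENNReal.ofReal ((R ^ 3)⁻¹) with hc
  have hc0 : c ≠ 0 := (ENNReal.ofReal_pos.2 (inv_pos.2 (pow_pos hR 3))).ne'
  have hct : c ≠ ⊤ := ENNReal.ofReal_ne_top
  have hdiv : Eel W' h θ 1 / c ≤ Eel W' h θ R := by
    refine le_sInf ?_
    rintro e ⟨v, hv, rfl⟩
    rw [ENNReal.div_le_iff_le_mul (Or.inl hc0) (Or.inl hct)]
    calc Eel W' h θ 1 ≤ c * ∫⁻ x in Oplus h (θ * R), W' (matOf (fderiv ℝ v x)) :=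
          Eel_key W' h θ R hR v hv
      _ = (∫⁻ x in Oplus h (θ * R), W' (matOf (fderiv ℝ v x))) * c := mul_comm _ _
  calc Eel W' h θ 1 = Eel W' h θ 1 / c * c := (ENNReal.div_mul_cancel hc0 hct).symm
    _ ≤ Eel W' h θ R * c := mul_le_mul_left hdiv c
    _ = c * Eel W' h θ R := mul_comm _ _


lemma Eel_at_inv (W' : Mat3 → ℝ≥0∞) (h α R : ℝ) (hW : W' (α • (1 : Mat3)) = 0) :
    Eel W' h α⁻¹ R = 0 := by
  refine le_antisymm ?_ zero_le
  have hD : ∀ x : E3, HasFDerivAt (fun y : E3 => α • y) (α • ContinuousLinearMap.id ℝ E3) x :=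
    fun x => (hasFDerivAt_id x).const_smul α
  have hmat : matOf (α • ContinuousLinearMap.id ℝ E3) = α • (1 : Mat3) := by
    ext i j
    simp [matOf, Matrix.smul_apply, Matrix.one_apply, EuclideanSpace.single_apply, eq_comm]
  have hzero : ∀ x : E3, W' (matOf (fderiv ℝ (fun y : E3 => α • y) x)) = 0 := fun x => by
    rw [(hD x).fderiv, hmat, hW]
  refine sInf_le ⟨fun y : E3 => α • y, ⟨?_, ?_, ?_⟩, ?_⟩
  · exact (continuous_const_smul α).continuousOn
  · exact (contDiff_id.const_smul α).contDiffOn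
  · intro x hx; rw [inv_inv]
  · simp [hzero]

lemma EtotInf_le (W : Mat3 → ℝ) (h σ α R : ℝ) (hα : 1 < α) (hσ : 0 < σ)
    (hW : W (α • (1 : Mat3)) = 0) :
    EtotInf W h σ α R ≤ ENNReal.ofReal (σ * R ^ 2) := by
  have hα0 : (0:ℝ) < α := lt_trans one_pos hα
  have hmem : α⁻¹ ∈ Set.Icc α⁻¹ (1:ℝ) := ⟨le_rfl, inv_le_one_of_one_le₀ hα.le⟩
  have h1 : EtotInf W h σ α R ≤ Etot W h σ α⁻¹ R := sInf_le ⟨α⁻¹, hmem, rfl⟩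
  have h2 : Eel (fun F => ENNReal.ofReal (W F)) h α⁻¹ R = 0 :=
    Eel_at_inv _ h α R (by rw [hW]; simp)
  rw [Etot, h2, zero_add] at h1
  refine h1.trans (ENNReal.ofReal_le_ofReal ?_)
  have h3 : σ * R ^ 2 * (1 - α⁻¹ ^ 2) ≤ σ * R ^ 2 * 1 := by
    apply mul_le_mul_of_nonneg_left _ (by positivity)
    nlinarith [sq_nonneg (α⁻¹)]
  linarith

/-- along any minimizing family `θ_R` for the total energy, the unit-size
elastic energy `E^{el}_{α,1}(θ_R)` tends to `0` as `R → +∞`. -/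
theorem minimizing_family_elastic_energy_vanishes
    (α σ h : ℝ) (hα : 1 < α) (hσ : 0 < σ) (hh : 0 < h)
    (W : Mat3 → ℝ) (hWcont : Continuous W) (hWnonneg : ∀ F, 0 ≤ W F)
    (hframe : ∀ Q ∈ SO3, ∀ F : Mat3, W (Q * F) = W F)
    (hWwell : W (α • (1 : Mat3)) = 0)
    (C₁ : ℝ) (hC₁ : 0 < C₁) (hgrowth : ∀ F : Mat3, C₁ * (distSO α F)^2 ≤ W F)
    (θfam : ℝ → ℝ) (hmem : ∀ R : ℝ, 0 < R → θfam R ∈ Set.Icc α⁻¹ 1)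
    (hmin : Filter.Tendsto (fun R => Etot W h σ (θfam R) R - EtotInf W h σ α R)
      Filter.atTop (nhds 0)) :
    Filter.Tendsto (fun R => Eel (fun F => ENNReal.ofReal (W F)) h (θfam R) 1)
      Filter.atTop (nhds 0) := by
  rw [ENNReal.tendsto_nhds_zero]
  intro ε hε
  have hε2 : (0:ℝ≥0∞) < ε / 2 := ENNReal.half_pos hε.ne'
  have hd := (ENNReal.tendsto_nhds_zero.mp hmin) (ε/2) hε2
  have hσR : Tendsto (fun R : ℝ => ENNReal.ofReal (σ / R)) atTop (nhds 0) := by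
    have h1 : Tendsto (fun R : ℝ => σ / R) atTop (nhds 0) := by
      simpa [div_eq_mul_inv] using tendsto_inv_atTop_zero.const_mul σ
    simpa using ENNReal.tendsto_ofReal h1
  have hs := (ENNReal.tendsto_nhds_zero.mp hσR) (ε/2) hε2
  filter_upwards [hd, hs, eventually_ge_atTop (1:ℝ)] with R hdR hsR hR1
  have hR : (0:ℝ) < R := lt_of_lt_of_le zero_lt_one hR1
  set θ := θfam R with hθ
  set d := Etot W h σ θ R - EtotInf W h σ α R with hdd
  have step1 := Eel_scale (fun F => ENNReal.ofReal (W F)) h θ R hR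
  have step2 : Eel (fun F => ENNReal.ofReal (W F)) h θ R ≤ Etot W h σ θ R :=
    self_le_add_right _ _
  have step3 : Etot W h σ θ R ≤ EtotInf W h σ α R + d := le_add_tsub
  have step4 := EtotInf_le W h σ α R hα hσ hWwell
  have hc1 : ENNReal.ofReal ((R ^ 3)⁻¹) ≤ 1 := by
    rw [show (1:ℝ≥0∞) = ENNReal.ofReal 1 by simp]
    exact ENNReal.ofReal_le_ofReal (inv_le_one_of_one_le₀ (one_le_pow₀ hR1))
  have hmul : ENNReal.ofReal ((R ^ 3)⁻¹) * ENNReal.ofReal (σ * R ^ 2)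
      = ENNReal.ofReal (σ / R) := by
    rw [← ENNReal.ofReal_mul (by positivity)]
    congr 1
    field_simp
  calc Eel (fun F => ENNReal.ofReal (W F)) h θ 1
      ≤ ENNReal.ofReal ((R ^ 3)⁻¹) * Eel (fun F => ENNReal.ofReal (W F)) h θ R := step1
    _ ≤ ENNReal.ofReal ((R ^ 3)⁻¹) * (ENNReal.ofReal (σ * R ^ 2) + d) :=
        mul_le_mul_right (step2.trans (step3.trans (add_le_add_left step4 d))) _
    _ = ENNReal.ofReal ((R ^ 3)⁻¹) * ENNReal.ofReal (σ * R ^ 2)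
        + ENNReal.ofReal ((R ^ 3)⁻¹) * d := mul_add _ _ _
    _ ≤ ENNReal.ofReal (σ / R) + d := by
        refine add_le_add (le_of_eq hmul) ?_
        calc ENNReal.ofReal ((R ^ 3)⁻¹) * d ≤ 1 * d := mul_le_mul_left hc1 d
          _ = d := one_mul d
    _ ≤ ε / 2 + ε / 2 := add_le_add hsR hdR
    _ = ε := ENNReal.add_halves ε
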